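/- Let φ1 and φ2 be unit vectors on the same finite-dimensional space with ⟨φ1|φ2⟩ ≠ 0, and for 0 < α < 1 let f_α : ℝ → ℝ ∪ {+∞} be defined by f_α(λ) := −λ^α for λ ≥ 0 and f_α(λ) := +∞ for λ < 0. Then: (a) for 0 < α ≤ 1/2, D_{f_α}^min(|φ1⟩⟨φ1| ‖ |φ2⟩⟨φ2|) = −|⟨φ1|φ2⟩|^{2(1−α)}; (b) for 1/2 ≤ α < 1, D_{f_α}^min(|φ1⟩⟨φ1| ‖ |φ2⟩⟨φ2|) = −|⟨φ1|φ2⟩|^{2α}. -/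

import Mathlib

open Filter Matrix
open scoped ComplexOrder
open scoped BigOperators

noncomputable section

attribute [local instance] Classical.propDecidable

/-- The effective domain of an extended-real-valued function. -/
def edom (f : ℝ → EReal) : Set ℝ := {x | f x < ⊤}

/-- The convex conjugate `f*`(t) = sup_λ (t·λ − f(λ)). -/
def econj (f : ℝ → EReal) (t : ℝ) : EReal := ⨆ l : ℝ, ((t * l : ℝ) : EReal) - f l

/-- The function `g` associated to `f`, i.e. the lsc positively homogeneous
extension of `(λ1,λ2) ↦ λ2 f(λ1/λ2)`. -/
def gfun (f : ℝ → EReal) (l1 l2 : ℝ) : EReal :=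
  if l1 = 0 ∧ l2 = 0 then 0
  else if l1 ∈ edom f ∧ 0 < l2 then ((l2 : ℝ) : EReal) * f (l1 / l2)
  else if l1 ∈ edom f ∧ l2 = 0 then
    limUnder (nhdsWithin 0 (Set.Ioi 0)) fun u : ℝ => ((u : ℝ) : EReal) * f (l1 / u)
  else ⊤

/-- A finite-outcome POVM. -/
def IsPOVM {n m : ℕ} (M : Fin m → Matrix (Fin n) (Fin n) ℂ) : Prop :=
  (∀ x, (M x).PosSemidef) ∧ ∑ x, M x = 1

/-- The maximized measured f-divergence `D_f^min`. -/
def Dfmin (f : ℝ → EReal) {n : ℕ} (ρ1 ρ2 : Matrix (Fin n) (Fin n) ℂ) : EReal :=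
  ⨆ (m : ℕ) (M : Fin m → Matrix (Fin n) (Fin n) ℂ) (_ : IsPOVM M),
    ∑ x, gfun f ((ρ1 * M x).trace.re) ((ρ2 * M x).trace.re)

/-- Functional calculus on a Hermitian matrix: apply `h` to the eigenvalues. -/
def hermFC {k : ℕ} (h : ℝ → ℝ) {A : Matrix (Fin k) (Fin k) ℂ} (hA : A.IsHermitian) :
    Matrix (Fin k) (Fin k) ℂ :=
  (hA.eigenvectorUnitary : Matrix (Fin k) (Fin k) ℂ) *
    Matrix.diagonal (fun i => (h (hA.eigenvalues i) : ℂ)) *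
    (star (hA.eigenvectorUnitary : Matrix (Fin k) (Fin k) ℂ))

/-- The spectrum of the Hermitian matrix `A` is contained in `S`. -/
def specIn {k : ℕ} {A : Matrix (Fin k) (Fin k) ℂ} (hA : A.IsHermitian) (S : Set ℝ) : Prop :=
  ∀ i, hA.eigenvalues i ∈ S

/-- The Loewner order: `A ≤ B`. -/
def Loewner {k : ℕ} (A B : Matrix (Fin k) (Fin k) ℂ) : Prop := (B - A).PosSemidef

/-- Operator convexity of a real function on a set `S` (midpoint form, via
the functional calculus on Hermitian matrices with spectrum in `S`). -/
def OpConvexOn (h : ℝ → ℝ) (S : Set ℝ) : Prop :=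
  ∀ (k : ℕ), 1 ≤ k → ∀ (A B : Matrix (Fin k) (Fin k) ℂ)
    (hA : A.IsHermitian) (hB : B.IsHermitian) (hM : ((1/2 : ℂ) • (A + B)).IsHermitian),
    specIn hA S → specIn hB S →
    Loewner (hermFC h hM) ((1/2 : ℂ) • (hermFC h hA + hermFC h hB))

/-- The real-valued version of the convex conjugate of `f` (used for the
functional calculus; on `dom f*` it agrees with `f*` when `f` is proper). -/
def econjR (f : ℝ → EReal) (t : ℝ) : ℝ := (econj f t).toReal

/-- Condition (I): `f*` is operator convex on its effective domain. -/
def CondI (f : ℝ → EReal) : Prop := OpConvexOn (econjR f) (edom (econj f))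

/-- `f` is a proper lower semicontinuous convex function with `dom f ⊇ (0,∞)`. -/
structure NiceF (f : ℝ → EReal) : Prop where
  ne_bot : ∀ x, f x ≠ ⊥
  ne_top : ∃ x, f x ≠ ⊤
  lsc : LowerSemicontinuous f
  convex : ∀ x y a b : ℝ, 0 ≤ a → 0 ≤ b → a + b = 1 →
    f (a * x + b * y) ≤ ((a : ℝ) : EReal) * f x + ((b : ℝ) : EReal) * f y
  dom : Set.Ioi (0 : ℝ) ⊆ edom f

/-- `f_α(λ) = −λ^α` for `λ ≥ 0`, `+∞` for `λ < 0` (here `0 < α < 1`). -/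
def falpha (α : ℝ) : ℝ → EReal := fun l => if 0 ≤ l then ((-(l ^ α) : ℝ) : EReal) else ⊤


lemma ereal_coe_sum {ι : Type*} (s : Finset ι) (f : ι → ℝ) :
    ((∑ i ∈ s, f i : ℝ) : EReal) = ∑ i ∈ s, ((f i : ℝ) : EReal) :=
  map_sum (⟨⟨Real.toEReal, EReal.coe_zero⟩, EReal.coe_add⟩ : ℝ →+ EReal) f s

/-- Cauchy–Schwarz for complex dot products. -/
lemma cs_dot {n : ℕ} (u v : Fin n → ℂ) :
    ‖star u ⬝ᵥ v‖ ≤ Real.sqrt (star u ⬝ᵥ u).re * Real.sqrt (star v ⬝ᵥ v).re := by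
  let U : EuclideanSpace ℂ (Fin n) := (WithLp.equiv 2 _).symm u
  let V : EuclideanSpace ℂ (Fin n) := (WithLp.equiv 2 _).symm v
  have key : ∀ a b : Fin n → ℂ,
      (inner ℂ ((WithLp.equiv 2 (Fin n → ℂ)).symm a) ((WithLp.equiv 2 (Fin n → ℂ)).symm b) : ℂ)
        = star a ⬝ᵥ b := by
    intro a b
    simp [PiLp.inner_apply, RCLike.inner_apply, dotProduct, Pi.star_apply, mul_comm]
  have h := norm_inner_le_norm (𝕜 := ℂ) U V
  rw [norm_eq_sqrt_re_inner (𝕜 := ℂ) U, norm_eq_sqrt_re_inner (𝕜 := ℂ) V] at h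
  simp only [U, V, key] at h
  exact h

lemma trace_vmv {n : ℕ} (φ ψ : Fin n → ℂ) (M : Matrix (Fin n) (Fin n) ℂ) :
    (Matrix.vecMulVec φ ψ * M).trace = ψ ⬝ᵥ (M *ᵥ φ) := by
  simp only [Matrix.trace, Matrix.diag, Matrix.mul_apply, Matrix.vecMulVec_apply,
    dotProduct, Matrix.mulVec, Finset.mul_sum]
  rw [Finset.sum_comm]
  exact Finset.sum_congr rfl fun j _ => Finset.sum_congr rfl fun i _ => by ring

lemma quad_re {n : ℕ} {M : Matrix (Fin n) (Fin n) ℂ} (hM : M.PosSemidef) (φ : Fin n → ℂ) :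
    star φ ⬝ᵥ (M *ᵥ φ) = (((star φ ⬝ᵥ (M *ᵥ φ)).re : ℝ) : ℂ) ∧ 0 ≤ (star φ ⬝ᵥ (M *ᵥ φ)).re := by
  have h := hM.dotProduct_mulVec_nonneg φ
  rw [Complex.nonneg_iff] at h
  exact ⟨Complex.ext rfl (by simp [h.2]), h.1⟩

lemma psd_cs {n : ℕ} {M : Matrix (Fin n) (Fin n) ℂ} (hM : M.PosSemidef) (u v : Fin n → ℂ) :
    ‖star u ⬝ᵥ (M *ᵥ v)‖ ≤
      Real.sqrt ((star u ⬝ᵥ (M *ᵥ u)).re * (star v ⬝ᵥ (M *ᵥ v)).re) := by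
  obtain ⟨S, hherm, hSS⟩ : ∃ S : Matrix (Fin n) (Fin n) ℂ, Sᴴ = S ∧ S * S = M := by
    open scoped MatrixOrder in
    exact ⟨CFC.sqrt M, (CFC.sqrt_nonneg M).isSelfAdjoint.star_eq, CFC.sqrt_mul_sqrt_self M hM.nonneg⟩
  have key : ∀ a b : Fin n → ℂ, star (S *ᵥ a) ⬝ᵥ (S *ᵥ b) = star a ⬝ᵥ (M *ᵥ b) := by
    intro a b
    rw [Matrix.star_mulVec, ← Matrix.dotProduct_mulVec, Matrix.mulVec_mulVec, hherm,
      hSS]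
  have h := cs_dot (S *ᵥ u) (S *ᵥ v)
  rw [key, key, key] at h
  calc ‖star u ⬝ᵥ (M *ᵥ v)‖ ≤ _ := h
    _ = _ := (Real.sqrt_mul (quad_re hM u).2 _).symm

lemma mem_edom_falpha {α l : ℝ} : l ∈ edom (falpha α) ↔ 0 ≤ l := by
  constructor
  · intro h
    by_contra hl
    simp only [edom, falpha, Set.mem_setOf_eq, if_neg hl] at h
    exact (lt_irrefl _ h)
  · intro h
    simp only [edom, falpha, Set.mem_setOf_eq, if_pos h]
    exact EReal.coe_lt_top _

lemma real_key {α p q : ℝ} (hp : 0 ≤ p) (hq : 0 < q) :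
    q * -((p / q) ^ α) = -(p ^ α * q ^ (1 - α)) := by
  rw [Real.div_rpow hp hq.le, Real.rpow_sub hq, Real.rpow_one]
  rw [div_eq_mul_inv, div_eq_mul_inv]
  ring

lemma gfun_falpha {α : ℝ} (hα0 : 0 < α) (hα1 : α < 1) (p q : ℝ) (hp : 0 ≤ p) (hq : 0 ≤ q) :
    gfun (falpha α) p q = ((-(p ^ α * q ^ (1 - α)) : ℝ) : EReal) := by
  rcases eq_or_lt_of_le hq with hq0 | hqpos
  · rcases eq_or_lt_of_le hp with hp0 | hppos
    · rw [gfun, if_pos ⟨hp0.symm, hq0.symm⟩]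
      rw [← hp0, Real.zero_rpow hα0.ne']
      norm_num
    · rw [gfun, if_neg (by push_neg; intro h; exact absurd h.symm hppos.ne),
        if_neg (by rintro ⟨-, h⟩; rw [← hq0] at h; exact lt_irrefl _ h),
        if_pos ⟨mem_edom_falpha.2 hp, hq0.symm⟩]
      have hT : Filter.Tendsto (fun u : ℝ => ((u : ℝ) : EReal) * falpha α (p / u))
          (nhdsWithin 0 (Set.Ioi 0)) (nhds (0 : EReal)) := by
        have hre : Filter.Tendsto (fun u : ℝ => -(p ^ α * u ^ (1 - α)))
            (nhdsWithin 0 (Set.Ioi 0)) (nhds (0 : ℝ)) := by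
          have h1 : Filter.Tendsto (fun u : ℝ => u ^ (1 - α)) (nhds 0) (nhds (0 : ℝ)) := by
            have := (Real.continuousAt_rpow_const 0 (1 - α) (Or.inr (by linarith))).tendsto
            simpa [Real.zero_rpow (by linarith : (1:ℝ) - α ≠ 0)] using this
          have h2 := (h1.const_mul (p ^ α)).neg
          simpa using h2.mono_left nhdsWithin_le_nhds
        have hco := (continuous_coe_real_ereal.tendsto 0).comp hre
        refine hco.congr' ?_
        filter_upwards [self_mem_nhdsWithin] with u hu
        have hu' : (0:ℝ) < u := hu
        have hpu : 0 ≤ p / u := div_nonneg hp hu'.le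
        simp only [Function.comp, falpha, if_pos hpu]
        rw [← EReal.coe_mul, real_key hp hu']
      rw [hT.limUnder_eq]
      rw [← hq0, Real.zero_rpow (by linarith : (1:ℝ) - α ≠ 0)]
      norm_num
  · rw [gfun, if_neg (by rintro ⟨-, h⟩; rw [h] at hqpos; exact lt_irrefl _ hqpos),
      if_pos ⟨mem_edom_falpha.2 hp, hqpos⟩]
    have hpq : 0 ≤ p / q := div_nonneg hp hqpos.le
    simp only [falpha, if_pos hpq]
    rw [← EReal.coe_mul, real_key hp hqpos]

lemma sum_bound {m : ℕ} (p q : Fin m → ℝ) (hp : ∀ x, 0 ≤ p x) (hq : ∀ x, 0 ≤ q x)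
    (hq1 : ∑ x, q x = 1) (β : ℝ) (hβl : 1/2 ≤ β) (hβu : β < 1)
    (F : ℝ) (hF : 0 ≤ F) (hCS : F ≤ ∑ x, Real.sqrt (p x * q x)) :
    F ^ (2*β) ≤ ∑ x, (p x) ^ β * (q x) ^ (1-β) := by
  rcases eq_or_lt_of_le hβl with hb | hb
  · rw [← hb]
    norm_num
    refine hCS.trans (le_of_eq (Finset.sum_congr rfl fun x _ => ?_))
    rw [Real.sqrt_eq_rpow, Real.mul_rpow (hp x) (hq x)]
  · have h2β : (1:ℝ) < 2*β := by linarith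
    have h2βne : (2*β) ≠ 0 := by linarith
    have h2β1ne : (2*β - 1) ≠ 0 := by linarith
    have hconj : (2*β).HolderConjugate (2*β/(2*β-1)) := by
      exact (Real.holderConjugate_iff_eq_conjExponent h2β).2 rfl
    set f : Fin m → ℝ := fun x => (p x) ^ (1/2:ℝ) * (q x) ^ ((1-β)/(2*β)) with hf
    set g : Fin m → ℝ := fun x => (q x) ^ ((2*β-1)/(2*β)) with hg
    have hfg : ∀ x, f x * g x = Real.sqrt (p x * q x) := by
      intro x
      rw [Real.sqrt_eq_rpow, Real.mul_rpow (hp x) (hq x)]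
      have : (q x) ^ ((1-β)/(2*β)) * (q x) ^ ((2*β-1)/(2*β)) = (q x) ^ (1/2:ℝ) := by
        rw [← Real.rpow_add' (hq x) (by rw [← add_div, show 1-β+(2*β-1) = β by ring]; exact div_ne_zero (by linarith) h2βne)]
        congr 1
        field_simp
        ring
      rw [hf, hg, mul_assoc, this]
    have hfP : ∀ x, (f x) ^ (2*β) = (p x) ^ β * (q x) ^ (1-β) := by
      intro x
      rw [hf, Real.mul_rpow (Real.rpow_nonneg (hp x) _) (Real.rpow_nonneg (hq x) _),
        ← Real.rpow_mul (hp x), ← Real.rpow_mul (hq x),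
        show 1/2*(2*β) = β by ring, show (1-β)/(2*β)*(2*β) = 1-β by field_simp]
    have hgQ : ∀ x, (g x) ^ (2*β/(2*β-1)) = q x := by
      intro x
      rw [hg, ← Real.rpow_mul (hq x)]
      rw [show (2*β-1)/(2*β) * (2*β/(2*β-1)) = 1 by field_simp, Real.rpow_one]
    have hH := Real.inner_le_Lp_mul_Lq_of_nonneg (f := f) (g := g) (s := Finset.univ) hconj
      (fun x _ => mul_nonneg (Real.rpow_nonneg (hp x) _) (Real.rpow_nonneg (hq x) _))
      (fun x _ => Real.rpow_nonneg (hq x) _)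
    simp only [hfg, hfP, hgQ] at hH
    rw [hq1, Real.one_rpow, mul_one] at hH
    have hS : 0 ≤ ∑ x, (p x) ^ β * (q x) ^ (1-β) :=
      Finset.sum_nonneg fun x _ =>
        mul_nonneg (Real.rpow_nonneg (hp x) _) (Real.rpow_nonneg (hq x) _)
    have hFS : F ≤ (∑ x, (p x) ^ β * (q x) ^ (1-β)) ^ (1/(2*β)) := hCS.trans hH
    calc F ^ (2*β) ≤ ((∑ x, (p x) ^ β * (q x) ^ (1-β)) ^ (1/(2*β))) ^ (2*β) :=
          Real.rpow_le_rpow hF hFS (by linarith)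
      _ = _ := by
          rw [← Real.rpow_mul hS, show 1/(2*β) * (2*β) = 1 by field_simp, Real.rpow_one]

lemma dot_star_comm {n : ℕ} (a b : Fin n → ℂ) :
    star a ⬝ᵥ b = (starRingEnd ℂ) (star b ⬝ᵥ a) := by
  simp [dotProduct, map_sum, mul_comm]

lemma vmv_mulVec {n : ℕ} (a b v : Fin n → ℂ) :
    Matrix.vecMulVec a b *ᵥ v = (b ⬝ᵥ v) • a := by
  ext j
  simp only [Matrix.mulVec, Matrix.vecMulVec_apply, dotProduct, Pi.smul_apply, smul_eq_mul,
    Finset.sum_mul]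
  exact Finset.sum_congr rfl fun i _ => by ring

lemma povm2 {n : ℕ} (ψ : Fin n → ℂ) (hψ : star ψ ⬝ᵥ ψ = 1) :
    IsPOVM ![Matrix.vecMulVec ψ (star ψ), 1 - Matrix.vecMulVec ψ (star ψ)] := by
  have herm : (Matrix.vecMulVec ψ (star ψ)).IsHermitian := by
    ext i j
    simp [Matrix.conjTranspose_apply, Matrix.vecMulVec_apply, mul_comm]
  have psd1 : (Matrix.vecMulVec ψ (star ψ)).PosSemidef := by
    refine .of_dotProduct_mulVec_nonneg herm fun x => ?_
    rw [vmv_mulVec, dotProduct_smul, dot_star_comm x ψ, smul_eq_mul, Complex.mul_conj]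
    simpa using Complex.normSq_nonneg (star ψ ⬝ᵥ x)
  have psd2 : ((1 : Matrix (Fin n) (Fin n) ℂ) - Matrix.vecMulVec ψ (star ψ)).PosSemidef := by
    refine .of_dotProduct_mulVec_nonneg (Matrix.isHermitian_one.sub herm) fun x => ?_
    rw [Matrix.sub_mulVec, dotProduct_sub, Matrix.one_mulVec, vmv_mulVec, dotProduct_smul,
      dot_star_comm x ψ, smul_eq_mul, Complex.mul_conj]
    have hx := quad_re Matrix.PosSemidef.one x
    rw [Matrix.one_mulVec] at hx
    have hcs := cs_dot ψ x
    rw [hψ] at hcs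
    simp only [Complex.one_re, Real.sqrt_one, one_mul] at hcs
    have hnorm : Complex.normSq (star ψ ⬝ᵥ x) ≤ (star x ⬝ᵥ x).re := by
      have h1 : ‖star ψ ⬝ᵥ x‖ ^ 2 ≤ Real.sqrt ((star x ⬝ᵥ x).re) ^ 2 :=
        pow_le_pow_left₀ (norm_nonneg _) hcs 2
      rw [Real.sq_sqrt hx.2, Complex.sq_norm] at h1
      exact h1
    rw [hx.1]
    rw [Complex.nonneg_iff]
    constructor
    · simpa using hnorm
    · simp
  refine ⟨fun x => ?_, ?_⟩
  · fin_cases x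
    · simpa using psd1
    · simpa using psd2
  · rw [Fin.sum_univ_two]
    simp only [Matrix.cons_val_zero, Matrix.cons_val_one, Matrix.head_cons]
    abel

lemma dfmin_ge (f : ℝ → EReal) {n m : ℕ} (ρ1 ρ2 : Matrix (Fin n) (Fin n) ℂ)
    (M : Fin m → Matrix (Fin n) (Fin n) ℂ) (hM : IsPOVM M) :
    (∑ x, gfun f ((ρ1 * M x).trace.re) ((ρ2 * M x).trace.re)) ≤ Dfmin f ρ1 ρ2 :=
  le_iSup_of_le m (le_iSup_of_le M (le_iSup_of_le hM le_rfl))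


/-- for two pure states,
`D_{f_α}^min = −|⟨φ1|φ2⟩|^{2(1−α)}` for `0 < α ≤ 1/2` and
`D_{f_α}^min = −|⟨φ1|φ2⟩|^{2α}` for `1/2 ≤ α < 1`. -/
theorem stmt_16 {n : ℕ} (φ1 φ2 : Fin n → ℂ)
    (hφ1 : star φ1 ⬝ᵥ φ1 = 1) (hφ2 : star φ2 ⬝ᵥ φ2 = 1)
    (hne : star φ1 ⬝ᵥ φ2 ≠ 0) (α : ℝ) (hα0 : 0 < α) (hα1 : α < 1) :
    (α ≤ 1/2 →
      Dfmin (falpha α) (Matrix.vecMulVec φ1 (star φ1)) (Matrix.vecMulVec φ2 (star φ2)) =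
        ((-(‖star φ1 ⬝ᵥ φ2‖ ^ (2 * (1 - α))) : ℝ) : EReal)) ∧
    (1/2 ≤ α →
      Dfmin (falpha α) (Matrix.vecMulVec φ1 (star φ1)) (Matrix.vecMulVec φ2 (star φ2)) =
        ((-(‖star φ1 ⬝ᵥ φ2‖ ^ (2 * α)) : ℝ) : EReal)) := by
  classical
  set ρ1 := Matrix.vecMulVec φ1 (star φ1) with hρ1
  set ρ2 := Matrix.vecMulVec φ2 (star φ2) with hρ2
  set c : ℂ := star φ1 ⬝ᵥ φ2 with hc
  set F : ℝ := ‖c‖ with hFdef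
  have hF0 : (0:ℝ) ≤ F := norm_nonneg c
  have hF1 : F ≤ 1 := by
    have h := cs_dot φ1 φ2
    rw [hφ1, hφ2] at h
    simpa [hFdef, hc] using h
  have h1α : (1:ℝ) - α ≠ 0 := by linarith
  have tr1 : ∀ {m : ℕ} (M : Fin m → Matrix (Fin n) (Fin n) ℂ) (x : Fin m),
      (ρ1 * M x).trace = star φ1 ⬝ᵥ (M x *ᵥ φ1) := fun M x => trace_vmv _ _ _
  have tr2 : ∀ {m : ℕ} (M : Fin m → Matrix (Fin n) (Fin n) ℂ) (x : Fin m),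
      (ρ2 * M x).trace = star φ2 ⬝ᵥ (M x *ᵥ φ2) := fun M x => trace_vmv _ _ _
  have sum_eq : ∀ (m : ℕ) (M : Fin m → Matrix (Fin n) (Fin n) ℂ), IsPOVM M →
      (∑ x, gfun (falpha α) ((ρ1 * M x).trace.re) ((ρ2 * M x).trace.re))
        = ((-(∑ x, ((star φ1 ⬝ᵥ (M x *ᵥ φ1)).re) ^ α * ((star φ2 ⬝ᵥ (M x *ᵥ φ2)).re) ^ (1-α))
            : ℝ) : EReal) := by
    intro m M hM
    have step : ∀ x : Fin m, gfun (falpha α) ((ρ1 * M x).trace.re) ((ρ2 * M x).trace.re)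
        = ((-(((star φ1 ⬝ᵥ (M x *ᵥ φ1)).re) ^ α * ((star φ2 ⬝ᵥ (M x *ᵥ φ2)).re) ^ (1-α))
            : ℝ) : EReal) := by
      intro x
      rw [tr1 M x, tr2 M x]
      exact gfun_falpha hα0 hα1 _ _ (quad_re (hM.1 x) φ1).2 (quad_re (hM.1 x) φ2).2
    rw [Finset.sum_congr rfl (fun x _ => step x), ← Finset.sum_neg_distrib, ereal_coe_sum]
  have dot_hom : ∀ (a b : Fin n → ℂ) {m : ℕ} (M : Fin m → Matrix (Fin n) (Fin n) ℂ),
      ∑ x, star a ⬝ᵥ (M x *ᵥ b) = star a ⬝ᵥ ((∑ x, M x) *ᵥ b) := by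
    intro a b m M
    exact (map_sum (AddMonoidHom.mk' (fun N : Matrix (Fin n) (Fin n) ℂ => star a ⬝ᵥ (N *ᵥ b))
      (fun A B => by simp [Matrix.add_mulVec, dotProduct_add])) M Finset.univ).symm
  have qsum : ∀ {m : ℕ} (M : Fin m → Matrix (Fin n) (Fin n) ℂ), IsPOVM M →
      ∑ x, (star φ2 ⬝ᵥ (M x *ᵥ φ2)).re = 1 := by
    intro m M hM
    rw [← Complex.re_sum, dot_hom φ2 φ2 M, hM.2, Matrix.one_mulVec, hφ2]
    simp
  have psum : ∀ {m : ℕ} (M : Fin m → Matrix (Fin n) (Fin n) ℂ), IsPOVM M →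
      ∑ x, (star φ1 ⬝ᵥ (M x *ᵥ φ1)).re = 1 := by
    intro m M hM
    rw [← Complex.re_sum, dot_hom φ1 φ1 M, hM.2, Matrix.one_mulVec, hφ1]
    simp
  have cs_sum : ∀ {m : ℕ} (M : Fin m → Matrix (Fin n) (Fin n) ℂ), IsPOVM M →
      F ≤ ∑ x, Real.sqrt ((star φ1 ⬝ᵥ (M x *ᵥ φ1)).re * (star φ2 ⬝ᵥ (M x *ᵥ φ2)).re) := by
    intro m M hM
    have h0 : c = ∑ x, star φ1 ⬝ᵥ (M x *ᵥ φ2) := by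
      rw [dot_hom φ1 φ2 M, hM.2, Matrix.one_mulVec, hc]
    calc F = ‖∑ x, star φ1 ⬝ᵥ (M x *ᵥ φ2)‖ := by rw [hFdef, h0]
      _ ≤ ∑ x, ‖star φ1 ⬝ᵥ (M x *ᵥ φ2)‖ := by
          simpa using
            norm_sum_le Finset.univ (fun x => star φ1 ⬝ᵥ (M x *ᵥ φ2))
      _ ≤ _ := Finset.sum_le_sum fun x _ => psd_cs (hM.1 x) φ1 φ2
  have upper_core : ∀ {m : ℕ} (M : Fin m → Matrix (Fin n) (Fin n) ℂ), IsPOVM M →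
      ∀ β : ℝ, 1/2 ≤ β → β < 1 → (β = α ∨ β = 1 - α) →
      F ^ (2*β) ≤ ∑ x, ((star φ1 ⬝ᵥ (M x *ᵥ φ1)).re) ^ α
        * ((star φ2 ⬝ᵥ (M x *ᵥ φ2)).re) ^ (1-α) := by
    intro m M hM β hβ1 hβ2 hcase
    rcases hcase with rfl | rfl
    · exact sum_bound _ _ (fun x => (quad_re (hM.1 x) φ1).2) (fun x => (quad_re (hM.1 x) φ2).2)
        (qsum M hM) _ hβ1 hβ2 F hF0 (cs_sum M hM)
    · have h := sum_bound (fun x => (star φ2 ⬝ᵥ (M x *ᵥ φ2)).re)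
        (fun x => (star φ1 ⬝ᵥ (M x *ᵥ φ1)).re)
        (fun x => (quad_re (hM.1 x) φ2).2) (fun x => (quad_re (hM.1 x) φ1).2)
        (psum M hM) (1-α) hβ1 hβ2 F hF0 ?_
      · refine h.trans (le_of_eq (Finset.sum_congr rfl fun x _ => ?_))
        rw [show (1:ℝ)-(1-α) = α by ring, mul_comm]
      · refine (cs_sum M hM).trans (le_of_eq (Finset.sum_congr rfl fun x _ => ?_))
        rw [mul_comm]
  have upper : ∀ β : ℝ, 1/2 ≤ β → β < 1 → (β = α ∨ β = 1 - α) →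
      Dfmin (falpha α) ρ1 ρ2 ≤ ((-(F ^ (2*β)) : ℝ) : EReal) := by
    intro β hβ1 hβ2 hcase
    refine iSup_le fun m => iSup_le fun M => iSup_le fun hM => ?_
    rw [sum_eq m M hM, EReal.coe_le_coe_iff]
    have := upper_core M hM β hβ1 hβ2 hcase
    linarith
  -- trace computations for the explicit two-outcome measurements
  have hcc : star φ2 ⬝ᵥ φ1 = (starRingEnd ℂ) c := by rw [dot_star_comm φ2 φ1, hc]
  have hre1 : ((ρ1 * ρ2).trace).re = F^2 := by
    rw [hρ1, hρ2, trace_vmv, vmv_mulVec, dotProduct_smul, smul_eq_mul, hcc, ← hc, mul_comm,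
      Complex.mul_conj, Complex.ofReal_re, hFdef]
    exact (Complex.sq_norm c).symm
  have hre2 : ((ρ2 * ρ2).trace).re = 1 := by
    rw [hρ2, trace_vmv, vmv_mulVec, dotProduct_smul, smul_eq_mul, hφ2]
    simp
  have htrρ1 : (ρ1).trace.re = 1 := by
    rw [show (ρ1).trace = (ρ1 * 1).trace by rw [mul_one], hρ1, trace_vmv, Matrix.one_mulVec, hφ1]
    simp
  have htrρ2 : (ρ2).trace.re = 1 := by
    rw [show (ρ2).trace = (ρ2 * 1).trace by rw [mul_one], hρ2, trace_vmv, Matrix.one_mulVec, hφ2]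
    simp
  have hre3 : ((ρ1 * (1 - ρ2)).trace).re = 1 - F^2 := by
    rw [mul_sub, mul_one, Matrix.trace_sub, Complex.sub_re, htrρ1, hre1]
  have hre4 : ((ρ2 * (1 - ρ2)).trace).re = 0 := by
    rw [mul_sub, mul_one, Matrix.trace_sub, Complex.sub_re, htrρ2, hre2]
    ring
  have hra1 : ((ρ1 * ρ1).trace).re = 1 := by
    rw [hρ1, trace_vmv, vmv_mulVec, dotProduct_smul, smul_eq_mul, hφ1]
    simp
  have hra2 : ((ρ2 * ρ1).trace).re = F^2 := by
    rw [hρ2, hρ1, trace_vmv, vmv_mulVec, dotProduct_smul, smul_eq_mul, ← hc, hcc,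
      Complex.mul_conj, Complex.ofReal_re, hFdef]
    exact (Complex.sq_norm c).symm
  have hra3 : ((ρ1 * (1 - ρ1)).trace).re = 0 := by
    rw [mul_sub, mul_one, Matrix.trace_sub, Complex.sub_re, htrρ1, hra1]
    ring
  have hra4 : ((ρ2 * (1 - ρ1)).trace).re = 1 - F^2 := by
    rw [mul_sub, mul_one, Matrix.trace_sub, Complex.sub_re, htrρ2, hra2]
  have hF2 : (0:ℝ) ≤ 1 - F^2 := by nlinarith
  have hpow : ∀ γ : ℝ, ((F^2 : ℝ)) ^ γ = F ^ (2*γ) := by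
    intro γ
    rw [← Real.rpow_natCast F 2, ← Real.rpow_mul hF0]
    norm_num
  have lower_b : ((-(F ^ (2*α)) : ℝ) : EReal) ≤ Dfmin (falpha α) ρ1 ρ2 := by
    have hM := povm2 φ2 hφ2
    rw [← hρ2] at hM
    refine le_trans (le_of_eq ?_) (dfmin_ge (falpha α) ρ1 ρ2 _ hM)
    rw [Fin.sum_univ_two]
    simp only [Matrix.cons_val_zero, Matrix.cons_val_one, Matrix.head_cons]
    rw [hre1, hre2, hre3, hre4,
      gfun_falpha hα0 hα1 _ _ (by positivity) (by norm_num),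
      gfun_falpha hα0 hα1 _ _ hF2 le_rfl,
      Real.one_rpow, Real.zero_rpow h1α, mul_one, mul_zero, neg_zero, hpow α,
      ← EReal.coe_add, add_zero]
  have lower_a : ((-(F ^ (2*(1-α))) : ℝ) : EReal) ≤ Dfmin (falpha α) ρ1 ρ2 := by
    have hM := povm2 φ1 hφ1
    rw [← hρ1] at hM
    refine le_trans (le_of_eq ?_) (dfmin_ge (falpha α) ρ1 ρ2 _ hM)
    rw [Fin.sum_univ_two]
    simp only [Matrix.cons_val_zero, Matrix.cons_val_one, Matrix.head_cons]
    rw [hra1, hra2, hra3, hra4,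
      gfun_falpha hα0 hα1 _ _ (by norm_num) (by positivity),
      gfun_falpha hα0 hα1 _ _ le_rfl hF2,
      Real.one_rpow, Real.zero_rpow hα0.ne', one_mul, zero_mul, neg_zero, hpow (1-α),
      ← EReal.coe_add, add_zero]
  constructor
  · intro hhalf
    exact le_antisymm (upper (1-α) (by linarith) (by linarith) (Or.inr rfl)) lower_a
  · intro hhalf
    exact le_antisymm (upper α hhalf hα1 (Or.inl rfl)) lower_b
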